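/- Let φ : ℝ → ℝ be C² and bounded, with |φ| ≤ M, let 0 ≤ ξ ≤ 1/4, and let f : ℝ → ℝ be C² with compact support. Then ∫ ((1−2ξ)(φ')² − 2ξ φ φ'') f² dλ ≥ −2ξ M² ∫ (f')² dλ. -/

import Mathlib

open MeasureTheory

theorem stmt_4 (φ : ℝ → ℝ) (hφ : ContDiff ℝ 2 φ) (M : ℝ) (hM : ∀ l, |φ l| ≤ M)
    (ξ : ℝ) (hξ0 : 0 ≤ ξ) (hξ1 : ξ ≤ 1/4)
    (f : ℝ → ℝ) (hf : ContDiff ℝ 2 f) (hfc : HasCompactSupport f) :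
    (∫ l : ℝ, ((1 - 2*ξ) * (deriv φ l)^2 - 2 * ξ * φ l * deriv (deriv φ) l) * (f l)^2)
      ≥ -2 * ξ * M^2 * ∫ l : ℝ, (deriv f l)^2 := by
  have M0 : 0 ≤ M := (abs_nonneg _).trans (hM 0)
  have hφ2 : ContDiff ℝ (1 + 1) φ := hφ.of_le (by norm_num)
  have hf2 : ContDiff ℝ (1 + 1) f := hf.of_le (by norm_num)
  have hφd : Differentiable ℝ φ := (contDiff_succ_iff_deriv.mp hφ2).1
  have hφ1 : ContDiff ℝ 1 (deriv φ) := (contDiff_succ_iff_deriv.mp hφ2).2.2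
  have hφd' : Differentiable ℝ (deriv φ) := hφ1.differentiable one_ne_zero
  have hfd : Differentiable ℝ f := (contDiff_succ_iff_deriv.mp hf2).1
  have hf1 : ContDiff ℝ 1 (deriv f) := (contDiff_succ_iff_deriv.mp hf2).2.2
  have hfd' : Differentiable ℝ (deriv f) := hf1.differentiable one_ne_zero
  -- continuity facts
  have cφ : Continuous φ := hφ.continuous
  have cφ' : Continuous (deriv φ) := hφ1.continuous
  have cφ'' : Continuous (deriv (deriv φ)) := hφ1.continuous_deriv le_rfl
  have cf : Continuous f := hf.continuous
  have cf' : Continuous (deriv f) := hf1.continuous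
  -- the auxiliary function u = φ * φ' * f^2 and its derivative
  set u : ℝ → ℝ := fun l => φ l * deriv φ l * (f l) ^ 2 with hu_def
  set u' : ℝ → ℝ := fun l =>
    (deriv φ l * deriv φ l + φ l * deriv (deriv φ) l) * (f l) ^ 2
      + (φ l * deriv φ l) * (2 * f l ^ 1 * deriv f l) with hu'_def
  have hder : ∀ l, HasDerivAt u (u' l) l := by
    intro l
    exact (((hφd l).hasDerivAt.mul (hφd' l).hasDerivAt).mul
      ((hfd l).hasDerivAt.pow 2))
  have hu1 : ContDiff ℝ 1 u :=
    ((hφ.of_le (by norm_num)).mul hφ1).mul ((hf.of_le (by norm_num)).pow 2)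
  have huc : HasCompactSupport u := by
    have h2 : HasCompactSupport (fun l => (f l) ^ 2) :=
      hfc.comp_left (g := fun x : ℝ => x ^ 2) (by simp)
    exact HasCompactSupport.mul_left (f := fun l => φ l * deriv φ l) h2
  have hdu : deriv u = u' := funext fun l => (hder l).deriv
  -- ∫ deriv u = 0
  have hduc : Continuous (deriv u) := hu1.continuous_deriv le_rfl
  have hdui : Integrable (deriv u) :=
    hduc.integrable_of_hasCompactSupport huc.deriv
  have h0 : ∫ l, u' l = 0 := by
    rw [← hdu, ← intervalIntegral.integral_Iic_add_Ioi (b := 0) hdui.integrableOn hdui.integrableOn,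
      HasCompactSupport.integral_Iic_deriv_eq hu1 huc 0,
      HasCompactSupport.integral_Ioi_deriv_eq hu1 huc 0]
    ring
  -- integrability of the two integrands
  have hsq : HasCompactSupport (fun l => (f l) ^ 2) :=
    hfc.comp_left (g := fun x : ℝ => x ^ 2) (by simp)
  have hF_int : Integrable (fun l =>
      ((1 - 2*ξ) * (deriv φ l)^2 - 2 * ξ * φ l * deriv (deriv φ) l) * (f l)^2) := by
    refine Continuous.integrable_of_hasCompactSupport (by fun_prop) ?_
    exact HasCompactSupport.mul_left
      (f := fun l => (1 - 2*ξ) * (deriv φ l)^2 - 2 * ξ * φ l * deriv (deriv φ) l) hsq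
  have hf'sq_int : Integrable (fun l => (deriv f l) ^ 2) := by
    refine Continuous.integrable_of_hasCompactSupport (by fun_prop) ?_
    exact hfc.deriv.comp_left (g := fun x : ℝ => x ^ 2) (by simp)
  have hG_int : Integrable (fun l => -2 * ξ * M^2 * (deriv f l)^2 - 2 * ξ * u' l) := by
    refine (hf'sq_int.const_mul _).sub ?_
    rw [← hdu]
    exact hdui.const_mul _
  -- pointwise bound
  have hpt : ∀ l, -2 * ξ * M^2 * (deriv f l)^2 - 2 * ξ * u' l
      ≤ ((1 - 2*ξ) * (deriv φ l)^2 - 2 * ξ * φ l * deriv (deriv φ) l) * (f l)^2 := by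
    intro l
    simp only [hu'_def]
    have hb : (φ l) ^ 2 ≤ M ^ 2 := sq_le_sq' (neg_le_of_abs_le (hM l)) (le_of_abs_le (hM l))
    have h12 : (0:ℝ) ≤ 1 - 2*ξ := by linarith
    nlinarith [sq_nonneg (deriv φ l * f l + 2 * ξ * φ l * deriv f l),
      mul_nonneg (mul_nonneg hξ0 (sq_nonneg (deriv f l))) (sub_nonneg.mpr hb),
      mul_nonneg (mul_nonneg (mul_nonneg hξ0 h12) (sq_nonneg (φ l))) (sq_nonneg (deriv f l))]
  have hmono := integral_mono hG_int hF_int hpt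
  have hGval : (∫ l, (-2 * ξ * M^2 * (deriv f l)^2 - 2 * ξ * u' l))
      = -2 * ξ * M^2 * ∫ l, (deriv f l)^2 := by
    rw [integral_sub (hf'sq_int.const_mul _) (by rw [← hdu]; exact hdui.const_mul _),
      integral_const_mul, integral_const_mul, h0]
    ring
  rw [hGval] at hmono
  exact hmono
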